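/- Let X have the non-central chi-squared distribution with k degrees of freedom and non-centrality parameter λ ≥ 0. Then for any x > 0, P( X ≤ k + λ + 2√((k + 2λ)x) + 2x ) ≥ 1 - exp(-x) and P( X ≥ k + λ - 2√((k + 2λ)x) ) ≥ 1 - exp(-x). -/

import Mathlib

open MeasureTheory ProbabilityTheory Real
open scoped ENNReal NNReal

lemma aux_log_lower {s : ℝ} (hs : 0 ≤ s) : s - s^2/2 ≤ Real.log (1+s) := by
  have key : ∀ u : ℝ, 0 ≤ u → HasDerivAt (fun y : ℝ => Real.log (1+y) - (y - y^2/2))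
      (u^2/(1+u)) u := by
    intro u hu
    have h1 : (0:ℝ) < 1 + u := by linarith
    have hd1 : HasDerivAt (fun y : ℝ => Real.log (1+y)) ((1+u)⁻¹) u := by
      have := ((hasDerivAt_id u).const_add (1:ℝ)).log h1.ne'
      simpa using this
    have hd2 : HasDerivAt (fun y : ℝ => y - y^2/2) (1 - u) u := by
      have := (hasDerivAt_id u).sub (((hasDerivAt_pow 2 u).div_const 2))
      simpa [Pi.sub_def] using this
    have := hd1.sub hd2
    have h1' : (1:ℝ) + u ≠ 0 := h1.ne'
    rw [show u^2/(1+u) = (1+u)⁻¹ - (1-u) by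
      rw [eq_sub_iff_add_eq, div_add' _ _ _ h1', inv_eq_one_div, div_left_inj' h1']; ring]
    exact this
  have hmono : MonotoneOn (fun y : ℝ => Real.log (1+y) - (y - y^2/2)) (Set.Ici 0) := by
    apply monotoneOn_of_deriv_nonneg (convex_Ici 0)
    · exact continuousOn_of_forall_continuousAt fun u hu => ((key u hu).continuousAt)
    · intro u hu
      rw [interior_Ici] at hu
      exact (key u hu.le).differentiableAt.differentiableWithinAt
    · intro u hu
      rw [interior_Ici] at hu
      rw [(key u hu.le).deriv]
      have h1 : (0:ℝ) < 1 + u := by have := Set.mem_Ioi.1 hu; linarith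
      positivity
  have := hmono (Set.self_mem_Ici) hs hs
  simp only [Real.log_one] at this
  norm_num at this
  linarith

lemma aux_log_upper {t : ℝ} (h0 : 0 < t) (h1 : t < 1/2) :
    -Real.log (1-2*t) ≤ 2*t + 2*t^2/(1-2*t) := by
  have ha : (0:ℝ) < 1 - 2*t := by linarith
  obtain ⟨c, hc0, hc⟩ : ∃ c : ℝ, 0 ≤ c ∧ c * (1-2*t) = 2*t^2 :=
    ⟨2*t^2/(1-2*t), by positivity, by field_simp⟩
  have hzdef : 2*t + 2*t^2/(1-2*t) = 2*t + c := by
    field_simp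
    nlinarith [hc]
  rw [hzdef]
  have hz0 : 0 ≤ 2*t + c := by linarith
  have h2 : (1-2*t)⁻¹ ≤ 1 + (2*t+c) + (2*t+c)^2/2 := by
    rw [inv_le_iff_one_le_mul₀ ha]
    nlinarith [sq_nonneg c, mul_nonneg (mul_nonneg hc0 hc0) ha.le, mul_nonneg hc0 h0.le]
  have h4 : (1-2*t)⁻¹ ≤ Real.exp (2*t+c) := h2.trans (Real.quadratic_le_exp_of_nonneg hz0)
  have h5 : Real.log ((1-2*t)⁻¹) ≤ 2*t+c := (Real.log_le_iff_le_exp (by positivity)).2 h4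
  rwa [Real.log_inv] at h5

lemma aux_complete_sq {b c : ℝ} (hb : 0 < b) (z : ℝ) :
    -b*z^2 + c*z = -b*(z - c/(2*b))^2 + c^2/(4*b) := by field_simp; ring

lemma aux_integrable_exp_quad {b c : ℝ} (hb : 0 < b) :
    Integrable (fun z : ℝ => Real.exp (-b*z^2 + c*z)) := by
  have h := (integrable_exp_neg_mul_sq hb).comp_sub_right (c/(2*b))
  have h2 := h.const_mul (Real.exp (c^2/(4*b)))
  refine h2.congr (Filter.Eventually.of_forall fun z => ?_)
  simp only [Function.comp]
  rw [← Real.exp_add, aux_complete_sq hb z]; ring_nf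

lemma aux_integral_exp_quad {b c : ℝ} (hb : 0 < b) :
    ∫ z : ℝ, Real.exp (-b*z^2 + c*z) = Real.sqrt (π/b) * Real.exp (c^2/(4*b)) := by
  have : ∀ z : ℝ, Real.exp (-b*z^2 + c*z)
      = Real.exp (c^2/(4*b)) * Real.exp (-b*(z - c/(2*b))^2) := by
    intro z; rw [← Real.exp_add, aux_complete_sq hb z]; ring_nf
  simp_rw [this]
  rw [integral_const_mul, integral_sub_right_eq_self (fun z => Real.exp (-b*z^2)) (c/(2*b)),
    integral_gaussian]
  ring

lemma aux_gauss_withDensity : gaussianReal 0 1 =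
    volume.withDensity (fun z => ((gaussianPDFReal 0 1 z).toNNReal : ℝ≥0∞)) := by
  rw [gaussianReal_of_var_ne_zero _ one_ne_zero]
  rfl

lemma aux_integrand (t μ : ℝ) (z : ℝ) : gaussianPDFReal 0 1 z * Real.exp (t*(z+μ)^2)
    = (Real.sqrt (2*π))⁻¹ * Real.exp (t*μ^2) * Real.exp (-(1/2-t)*z^2 + (2*t*μ)*z) := by
  have h1 : -(z-(0:ℝ))^2/(2*(1:ℝ)) + t*(z+μ)^2 = (t*μ^2) + (-(1/2-t)*z^2 + (2*t*μ)*z) := by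
    ring
  rw [gaussianPDFReal]
  push_cast
  rw [mul_assoc, ← Real.exp_add, h1, Real.exp_add, mul_one]
  ring

lemma aux_gauss_integrable {t : ℝ} (μ : ℝ) (ht : t < 1/2) :
    Integrable (fun z : ℝ => Real.exp (t * (z + μ)^2)) (gaussianReal 0 1) := by
  have hb : (0:ℝ) < 1/2 - t := by linarith
  rw [aux_gauss_withDensity,
    integrable_withDensity_iff_integrable_smul (measurable_gaussianPDFReal 0 1).real_toNNReal]
  have := ((aux_integrable_exp_quad hb (c := 2*t*μ)).const_mul
    ((Real.sqrt (2*π))⁻¹ * Real.exp (t*μ^2)))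
  refine this.congr (Filter.Eventually.of_forall fun z => ?_)
  beta_reduce
  rw [NNReal.smul_def, smul_eq_mul, Real.coe_toNNReal _ (gaussianPDFReal_nonneg 0 1 z),
    aux_integrand t μ z]

lemma aux_gauss_mgf {t : ℝ} (μ : ℝ) (ht : t < 1/2) :
    ∫ z, Real.exp (t * (z + μ)^2) ∂(gaussianReal 0 1)
      = Real.exp (μ^2 * t / (1 - 2*t)) / Real.sqrt (1 - 2*t) := by
  have hb : (0:ℝ) < 1/2 - t := by linarith
  rw [aux_gauss_withDensity,
    integral_withDensity_eq_integral_smul (measurable_gaussianPDFReal 0 1).real_toNNReal]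
  have heq : ∀ z : ℝ, (gaussianPDFReal 0 1 z).toNNReal • Real.exp (t * (z + μ)^2)
      = (Real.sqrt (2*π))⁻¹ * Real.exp (t*μ^2) * Real.exp (-(1/2-t)*z^2 + (2*t*μ)*z) := by
    intro z
    rw [NNReal.smul_def, smul_eq_mul, Real.coe_toNNReal _ (gaussianPDFReal_nonneg 0 1 z),
      aux_integrand t μ z]
  simp_rw [heq]
  rw [integral_const_mul, aux_integral_exp_quad hb]
  have h2π : (0:ℝ) < 2*π := by positivity
  have hinner : (2*π)⁻¹ * (π/(1/2-t)) = (1-2*t)⁻¹ := by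
    have hπ : π ≠ 0 := Real.pi_ne_zero
    have hne1 : (1:ℝ) - 2*t ≠ 0 := by linarith
    have hne2 : (1:ℝ)/2 - t ≠ 0 := by linarith
    field_simp
  have h1 : (Real.sqrt (2*π))⁻¹ * Real.sqrt (π/(1/2-t)) = (Real.sqrt (1-2*t))⁻¹ := by
    calc (Real.sqrt (2*π))⁻¹ * Real.sqrt (π/(1/2-t))
        = Real.sqrt ((2*π)⁻¹) * Real.sqrt (π/(1/2-t)) := by rw [Real.sqrt_inv]
      _ = Real.sqrt ((2*π)⁻¹ * (π/(1/2-t))) := (Real.sqrt_mul (by positivity) _).symm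
      _ = Real.sqrt ((1-2*t)⁻¹) := by rw [hinner]
      _ = (Real.sqrt (1-2*t))⁻¹ := Real.sqrt_inv _
  have h2 : t*μ^2 + (2*t*μ)^2/(4*(1/2-t)) = μ^2 * t / (1-2*t) := by
    have hne1 : (1:ℝ) - 2*t ≠ 0 := by linarith
    have hne2 : (1:ℝ)/2 - t ≠ 0 := by linarith
    rw [add_comm, div_add' _ _ _ (mul_ne_zero (by norm_num) hne2),
      div_eq_div_iff (mul_ne_zero (by norm_num) hne2) hne1]
    ring
  calc (Real.sqrt (2*π))⁻¹ * Real.exp (t*μ^2) * (Real.sqrt (π/(1/2-t)) * Real.exp ((2*t*μ)^2/(4*(1/2-t))))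
      = ((Real.sqrt (2*π))⁻¹ * Real.sqrt (π/(1/2-t))) * (Real.exp (t*μ^2) * Real.exp ((2*t*μ)^2/(4*(1/2-t)))) := by ring
    _ = (Real.sqrt (1-2*t))⁻¹ * Real.exp (μ^2 * t / (1-2*t)) := by rw [h1, ← Real.exp_add, h2]
    _ = Real.exp (μ^2 * t / (1 - 2*t)) / Real.sqrt (1 - 2*t) := by rw [div_eq_mul_inv]; ring

lemma aux_iIndepFun_congr {Ω : Type*} [MeasureSpace Ω] {ι : Type*} {f g : ι → Ω → ℝ}
    (h : iIndepFun f volume)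
    (hfg : ∀ i, f i =ᵐ[(volume : Measure Ω)] g i) :
    iIndepFun g volume := by
  rw [iIndepFun_iff_measure_inter_preimage_eq_mul] at h ⊢
  intro S sets hsets
  have hae : ∀ᵐ ω ∂(volume : Measure Ω), ∀ i ∈ S, f i ω = g i ω :=
    (MeasureTheory.ae_ball_iff S.countable_toSet).2 fun i _ => hfg i
  have h1 : ((⋂ i ∈ S, g i ⁻¹' sets i) : Set Ω) =ᵐ[(volume : Measure Ω)]
      (⋂ i ∈ S, f i ⁻¹' sets i) := by
    refine Filter.eventuallyEq_set.2 ?_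
    filter_upwards [hae] with ω hω
    simp only [Set.mem_iInter, Set.mem_preimage]
    exact ⟨fun h' i hi => (hω i hi) ▸ h' i hi, fun h' i hi => (hω i hi) ▸ h' i hi⟩
  rw [measure_congr h1, h S hsets]
  refine Finset.prod_congr rfl fun i hi => ?_
  refine (measure_congr (Filter.eventuallyEq_set.2 ?_)).symm
  filter_upwards [hfg i] with ω hω
  simp only [Set.mem_preimage, hω]

lemma aux_upper_key {k lam x : ℝ} (hk : 1 ≤ k) (hlam : 0 ≤ lam) (hx : 0 < x) :
    ∃ t : ℝ, 0 < t ∧ t < 1/2 ∧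
      -t*(k+lam+2*Real.sqrt ((k+2*lam)*x)+2*x) + lam*t/(1-2*t)
        + (k/2)*(-Real.log (1-2*t)) ≤ -x := by
  have hv : (1:ℝ) ≤ k + 2*lam := by linarith
  set w := Real.sqrt (k+2*lam) with hwdef
  set s := Real.sqrt x with hsdef
  have hw1 : (1:ℝ) ≤ w := by
    rw [hwdef, show (1:ℝ) = Real.sqrt 1 by simp]
    exact Real.sqrt_le_sqrt hv
  have hw0 : 0 < w := by linarith
  have hs0 : 0 < s := Real.sqrt_pos.2 hx
  have hD0 : 0 < w + 2*s := by linarith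
  have hx2 : s^2 = x := Real.sq_sqrt hx.le
  have hw2 : w^2 = k + 2*lam := Real.sq_sqrt (by linarith)
  have hvx : Real.sqrt ((k+2*lam)*x) = w*s := by
    rw [Real.sqrt_mul (by linarith) x]
  refine ⟨s/(w+2*s), by positivity, ?_, ?_⟩
  · rw [div_lt_iff₀ hD0]; nlinarith
  · have ht0 : 0 < s/(w+2*s) := by positivity
    have ht12 : s/(w+2*s) < 1/2 := by rw [div_lt_iff₀ hD0]; nlinarith
    have h12 : 1 - 2*(s/(w+2*s)) = w/(w+2*s) := by field_simp; ring
    have hlog := aux_log_upper ht0 ht12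
    have hk2 : 0 ≤ k/2 := by linarith
    have step : -(s/(w+2*s))*(k+lam+2*Real.sqrt ((k+2*lam)*x)+2*x)
          + lam*(s/(w+2*s))/(1-2*(s/(w+2*s)))
          + (k/2)*(-Real.log (1-2*(s/(w+2*s))))
        ≤ -(s/(w+2*s))*(k+lam+2*(w*s)+2*s^2) + lam*(s/(w+2*s))/(w/(w+2*s))
          + (k/2)*(2*(s/(w+2*s))+2*(s/(w+2*s))^2/(1-2*(s/(w+2*s)))) := by
      rw [hvx, hx2, h12]
      gcongr
      rw [← h12]
      exact hlog
    refine step.trans (le_of_eq ?_)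
    rw [h12, ← hx2, show k = w^2 - 2*lam by linarith]
    have hDne : w + 2*s ≠ 0 := ne_of_gt hD0
    have hwne : w ≠ 0 := ne_of_gt hw0
    field_simp
    ring

lemma aux_lower_key {k lam x : ℝ} (hk : 1 ≤ k) (hlam : 0 ≤ lam) (hx : 0 < x) :
    ∃ t : ℝ, t < 0 ∧
      -t*(k+lam-2*Real.sqrt ((k+2*lam)*x)) + lam*t/(1-2*t)
        + (k/2)*(-Real.log (1-2*t)) ≤ -x := by
  have hv : (1:ℝ) ≤ k + 2*lam := by linarith
  set w := Real.sqrt (k+2*lam) with hwdef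
  set s := Real.sqrt x with hsdef
  have hw1 : (1:ℝ) ≤ w := by
    rw [hwdef, show (1:ℝ) = Real.sqrt 1 by simp]
    exact Real.sqrt_le_sqrt hv
  have hw0 : 0 < w := by linarith
  have hs0 : 0 < s := Real.sqrt_pos.2 hx
  have hx2 : s^2 = x := Real.sq_sqrt hx.le
  have hw2 : w^2 = k + 2*lam := Real.sq_sqrt (by linarith)
  have hvx : Real.sqrt ((k+2*lam)*x) = w*s := by
    rw [Real.sqrt_mul (by linarith) x]
  have hwne : w ≠ 0 := ne_of_gt hw0
  refine ⟨-(s/w), neg_lt_zero.2 (by positivity), ?_⟩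
  set t : ℝ := -(s/w) with htdef
  have ht0 : t < 0 := by rw [htdef]; exact neg_lt_zero.2 (by positivity)
  have h12 : 1 - 2*t = 1 + 2*s/w := by rw [htdef]; ring
  have h121 : (1:ℝ) ≤ 1 - 2*t := by
    rw [h12]
    have h' : 0 ≤ 2*s/w := by positivity
    linarith
  -- log bound
  have hlog : -Real.log (1-2*t) ≤ 2*t + 2*t^2 := by
    have := aux_log_lower (s := 2*s/w) (by positivity)
    rw [← h12] at this
    have h1 : -Real.log (1-2*t) ≤ -((2*s/w) - (2*s/w)^2/2) := by linarith
    refine h1.trans (le_of_eq ?_)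
    rw [htdef]; ring
  -- lam bound
  have hlam2 : lam*t/(1-2*t) ≤ lam*t + 2*lam*t^2 := by
    have hident : lam*t/(1-2*t) = lam*t + 2*lam*t^2/(1-2*t) := by
      have : (1:ℝ) - 2*t ≠ 0 := by linarith
      rw [div_eq_iff this, add_mul, div_mul_cancel₀ _ this]
      ring
    rw [hident]
    have : 2*lam*t^2/(1-2*t) ≤ 2*lam*t^2 := by
      apply div_le_self (by positivity) h121
    linarith
  have hk2 : 0 ≤ k/2 := by linarith
  have step : -t*(k+lam-2*Real.sqrt ((k+2*lam)*x)) + lam*t/(1-2*t)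
        + (k/2)*(-Real.log (1-2*t))
      ≤ -t*(k+lam-2*(w*s)) + (lam*t + 2*lam*t^2) + (k/2)*(2*t+2*t^2) := by
    rw [hvx]
    gcongr
  refine step.trans (le_of_eq ?_)
  rw [htdef, ← hx2, show k = w^2 - 2*lam by linarith]
  field_simp
  ring

theorem noncentral_chi_squared_concentration {Ω : Type*} [MeasureSpace Ω]
    (hP : IsProbabilityMeasure (volume : Measure Ω))
    (k : ℕ) (hk : 0 < k) (Z : Fin k → Ω → ℝ)
    (hindep : iIndepFun Z volume)
    (hgauss : ∀ i, Measure.map (Z i) volume = gaussianReal 0 1)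
    (μpar : Fin k → ℝ) (lam : ℝ) (hlam : lam = ∑ i, (μpar i) ^ 2)
    (x : ℝ) (hx : 0 < x) :
    (volume {ω | (∑ i, (Z i ω + μpar i) ^ 2) ≤
        (k : ℝ) + lam + 2 * Real.sqrt (((k : ℝ) + 2 * lam) * x) + 2 * x}).toReal ≥
      1 - Real.exp (-x) ∧
    (volume {ω | (∑ i, (Z i ω + μpar i) ^ 2) ≥
        (k : ℝ) + lam - 2 * Real.sqrt (((k : ℝ) + 2 * lam) * x)}).toReal ≥
      1 - Real.exp (-x) := by
  haveI := hP
  have hk1 : (1:ℝ) ≤ (k:ℝ) := by exact_mod_cast hk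
  have hlam0 : 0 ≤ lam := hlam ▸ Finset.sum_nonneg (fun i _ => sq_nonneg _)
  -- a.e. measurable versions
  have hZae : ∀ i, AEMeasurable (Z i) (volume : Measure Ω) := by
    intro i
    by_contra h
    have h0 := Measure.map_of_not_aemeasurable h
    rw [hgauss i] at h0
    exact (IsProbabilityMeasure.ne_zero (gaussianReal 0 1)) h0
  set Z' : Fin k → Ω → ℝ := fun i => (hZae i).mk (Z i) with hZ'def
  have hZ'me : ∀ i, Measurable (Z' i) := fun i => (hZae i).measurable_mk
  have hZeq : ∀ i, Z i =ᵐ[(volume : Measure Ω)] Z' i := fun i => (hZae i).ae_eq_mk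
  have hindep' := aux_iIndepFun_congr hindep hZeq
  have hgauss' : ∀ i, Measure.map (Z' i) volume = gaussianReal 0 1 := fun i => by
    rw [← Measure.map_congr (hZeq i), hgauss i]
  set Y : Fin k → Ω → ℝ := fun i ω => (Z' i ω + μpar i)^2 with hYdef
  have hYme : ∀ i, Measurable (Y i) := fun i => ((hZ'me i).add_const _).pow_const 2
  have hYindep : iIndepFun Y volume := by
    have := hindep'.comp (fun i z => (z + μpar i)^2)
      (fun i => (measurable_id.add_const _).pow_const 2)
    exact this
  -- integrability
  have hint : ∀ t : ℝ, t < 1/2 → ∀ i, Integrable (fun ω => Real.exp (t * Y i ω)) volume := by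
    intro t ht i
    have h1 : Integrable (fun z => Real.exp (t*(z+μpar i)^2)) (Measure.map (Z' i) volume) := by
      rw [hgauss' i]; exact aux_gauss_integrable (μpar i) ht
    rw [integrable_map_measure
      (Continuous.aestronglyMeasurable (by continuity)) (hZ'me i).aemeasurable] at h1
    exact h1
  -- mgf of each Y i
  have hmgf : ∀ t : ℝ, t < 1/2 → ∀ i, mgf (Y i) volume t
      = Real.exp ((μpar i)^2 * t/(1-2*t)) / Real.sqrt (1-2*t) := by
    intro t ht i
    have h1 : mgf (Y i) volume t
        = ∫ z, Real.exp (t*(z+μpar i)^2) ∂(Measure.map (Z' i) volume) := by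
      rw [integral_map (hZ'me i).aemeasurable
        (Continuous.aestronglyMeasurable (by continuity))]
      rfl
    rw [h1, hgauss' i, aux_gauss_mgf (μpar i) ht]
  -- mgf of the sum
  have hmgfsum : ∀ t : ℝ, t < 1/2 → mgf (∑ i, Y i) volume t
      = Real.exp (lam * t/(1-2*t)) / Real.exp ((k:ℝ)/2 * Real.log (1-2*t)) := by
    intro t ht
    have h0 : (0:ℝ) < 1-2*t := by linarith
    have hpow : (Real.sqrt (1-2*t))^(k:ℕ) = Real.exp ((k:ℝ)/2 * Real.log (1-2*t)) := by
      rw [← Real.exp_log (Real.sqrt_pos.2 h0), ← Real.exp_nat_mul, Real.log_sqrt h0.le]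
      ring_nf
    rw [iIndepFun.mgf_sum hYindep hYme]
    calc ∏ i, mgf (Y i) volume t
        = ∏ i : Fin k, Real.exp ((μpar i)^2*t/(1-2*t)) / Real.sqrt (1-2*t) :=
          Finset.prod_congr rfl fun i _ => hmgf t ht i
      _ = (∏ i : Fin k, Real.exp ((μpar i)^2*t/(1-2*t))) / (Real.sqrt (1-2*t))^(k:ℕ) := by
          rw [Finset.prod_div_distrib, Finset.prod_const, Finset.card_fin]
      _ = Real.exp (lam*t/(1-2*t)) / Real.exp ((k:ℝ)/2 * Real.log (1-2*t)) := by
          rw [← Real.exp_sum, hpow]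
          congr 1
          rw [hlam, Finset.sum_mul, Finset.sum_div]
  -- the measurable sum
  set F : Ω → ℝ := fun ω => ∑ i, Y i ω with hFdef
  have hFme : Measurable F := Finset.measurable_sum _ (fun i _ => hYme i)
  have hFsum : (∑ i, Y i) = F := by
    funext ω
    simp [hFdef, Finset.sum_apply]
  have hae : ∀ᵐ ω ∂(volume : Measure Ω), ∀ i, Z i ω = Z' i ω := ae_all_iff.2 hZeq
  constructor
  · -- upper tail
    obtain ⟨t, ht0, ht12, hexp⟩ := aux_upper_key hk1 hlam0 hx
    set m : ℝ := (k : ℝ) + lam + 2 * Real.sqrt (((k : ℝ) + 2 * lam) * x) + 2 * x with hmdef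
    have hcher := measure_ge_le_exp_mul_mgf (μ := (volume : Measure Ω)) (X := ∑ i, Y i) m ht0.le
      (hYindep.integrable_exp_mul_sum hYme (fun i _ => hint t ht12 i))
    rw [hmgfsum t ht12, hFsum] at hcher
    have hbound : Real.exp (-t*m) * (Real.exp (lam*t/(1-2*t))
        / Real.exp ((k:ℝ)/2 * Real.log (1-2*t))) ≤ Real.exp (-x) := by
      rw [← Real.exp_sub, ← Real.exp_add, Real.exp_le_exp]
      calc -t*m + (lam*t/(1-2*t) - (k:ℝ)/2 * Real.log (1-2*t))
          = -t*m + lam*t/(1-2*t) + ((k:ℝ)/2)*(-Real.log (1-2*t)) := by ring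
        _ ≤ -x := hexp
    have hup : (volume {ω | m ≤ F ω}).toReal ≤ Real.exp (-x) := hcher.trans hbound
    -- complement bookkeeping
    have hA : MeasurableSet {ω | F ω ≤ m} := measurableSet_le hFme measurable_const
    have hcompl : volume {ω | F ω ≤ m}ᶜ = 1 - volume {ω | F ω ≤ m} :=
      prob_compl_eq_one_sub hA
    have hsub : {ω | F ω ≤ m}ᶜ ⊆ {ω | m ≤ F ω} := by
      intro ω hω
      simp only [Set.mem_compl_iff, Set.mem_setOf_eq, not_le] at hω
      exact le_of_lt hω
    have h2 : (volume {ω | F ω ≤ m}ᶜ).toReal ≤ Real.exp (-x) :=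
      le_trans (ENNReal.toReal_mono (measure_ne_top _ _) (measure_mono hsub)) hup
    have h3 : (volume {ω | F ω ≤ m}ᶜ).toReal = 1 - (volume {ω | F ω ≤ m}).toReal := by
      rw [hcompl, ENNReal.toReal_sub_of_le prob_le_one ENNReal.one_ne_top]
      simp
    have hsets : volume {ω | (∑ i, (Z i ω + μpar i) ^ 2) ≤ m} = volume {ω | F ω ≤ m} := by
      apply measure_congr
      refine Filter.eventuallyEq_set.2 ?_
      filter_upwards [hae] with ω hω
      have hsum : ∑ i, (Z i ω + μpar i)^2 = ∑ i, (Z' i ω + μpar i)^2 :=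
        Finset.sum_congr rfl fun i _ => by rw [hω i]
      simp only [Set.mem_setOf_eq, hFdef, hYdef, hsum]
    rw [hsets]
    linarith
  · -- lower tail
    obtain ⟨t, ht0, hexp⟩ := aux_lower_key hk1 hlam0 hx
    have ht12 : t < 1/2 := by linarith
    set m : ℝ := (k : ℝ) + lam - 2 * Real.sqrt (((k : ℝ) + 2 * lam) * x) with hmdef
    have hcher := measure_le_le_exp_mul_mgf (μ := (volume : Measure Ω)) (X := ∑ i, Y i) m ht0.le
      (hYindep.integrable_exp_mul_sum hYme (fun i _ => hint t ht12 i))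
    rw [hmgfsum t ht12, hFsum] at hcher
    have hbound : Real.exp (-t*m) * (Real.exp (lam*t/(1-2*t))
        / Real.exp ((k:ℝ)/2 * Real.log (1-2*t))) ≤ Real.exp (-x) := by
      rw [← Real.exp_sub, ← Real.exp_add, Real.exp_le_exp]
      calc -t*m + (lam*t/(1-2*t) - (k:ℝ)/2 * Real.log (1-2*t))
          = -t*m + lam*t/(1-2*t) + ((k:ℝ)/2)*(-Real.log (1-2*t)) := by ring
        _ ≤ -x := hexp
    have hup : (volume {ω | F ω ≤ m}).toReal ≤ Real.exp (-x) := hcher.trans hbound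
    have hA : MeasurableSet {ω | m ≤ F ω} := measurableSet_le measurable_const hFme
    have hcompl : volume {ω | m ≤ F ω}ᶜ = 1 - volume {ω | m ≤ F ω} :=
      prob_compl_eq_one_sub hA
    have hsub : {ω | m ≤ F ω}ᶜ ⊆ {ω | F ω ≤ m} := by
      intro ω hω
      simp only [Set.mem_compl_iff, Set.mem_setOf_eq, not_le] at hω
      exact le_of_lt hω
    have h2 : (volume {ω | m ≤ F ω}ᶜ).toReal ≤ Real.exp (-x) :=
      le_trans (ENNReal.toReal_mono (measure_ne_top _ _) (measure_mono hsub)) hup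
    have h3 : (volume {ω | m ≤ F ω}ᶜ).toReal = 1 - (volume {ω | m ≤ F ω}).toReal := by
      rw [hcompl, ENNReal.toReal_sub_of_le prob_le_one ENNReal.one_ne_top]
      simp
    have hsets : volume {ω | (∑ i, (Z i ω + μpar i) ^ 2) ≥ m} = volume {ω | m ≤ F ω} := by
      apply measure_congr
      refine Filter.eventuallyEq_set.2 ?_
      filter_upwards [hae] with ω hω
      have hsum : ∑ i, (Z i ω + μpar i)^2 = ∑ i, (Z' i ω + μpar i)^2 :=
        Finset.sum_congr rfl fun i _ => by rw [hω i]
      simp only [Set.mem_setOf_eq, hFdef, hYdef, ge_iff_le, hsum]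
    rw [hsets]
    linarith
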